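/- Let U be an irreducible W-module and let x be an element of A (or of H) lying in a W-submodule isomorphic to U which it generates. Fix representatives s_ℓ ∈ T_ℓ and s_p ∈ T_p of the conjugacy classes of reflections. Then δ(D_c(x)) = ( c(s_ℓ)·|T_ℓ|·(1 − χ_U(s_ℓ)/χ_U(1)) + c(s_p)·|T_p|·(1 − χ_U(s_p)/χ_U(1)) )·x, where χ_U is the character of U. -/

import Mathlib

open scoped TensorProduct
noncomputable section

abbrev Vc (r : ℕ) := Fin r → ℂ
abbrev Pc (r : ℕ) := MvPolynomial (Fin r) ℂ
abbrev Ec (r : ℕ) := ExteriorAlgebra ℂ (Vc r)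
abbrev Wc (r : ℕ) := Ec r ⊗[ℂ] Pc r

variable {r : ℕ}

/-- The standard symmetric bilinear form on `ℂ^r`. -/
def bil (x y : Vc r) : ℂ := ∑ i, x i * y i

/-- A vector of `ℂ^r` viewed as a degree-one polynomial. -/
def linP (v : Vc r) : Pc r := ∑ i, MvPolynomial.C (v i) * MvPolynomial.X i

/-- The action of a linear automorphism of `V` on polynomials (i.e. on `S(V)`). -/
def pAct (g : Vc r ≃ₗ[ℂ] Vc r) : Pc r →ₐ[ℂ] Pc r :=
  MvPolynomial.aeval fun i => linP (g (Pi.single i 1))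

/-- The action of a linear automorphism of `V` on the exterior algebra of `V`. -/
def eAct (g : Vc r ≃ₗ[ℂ] Vc r) : Ec r →ₐ[ℂ] Ec r :=
  ExteriorAlgebra.map (g : Vc r →ₗ[ℂ] Vc r)

/-- The diagonal action of a linear automorphism of `V` on the Weil algebra `⋀V ⊗ S(V)`. -/
def wAct (g : Vc r ≃ₗ[ℂ] Vc r) : Wc r →ₐ[ℂ] Wc r :=
  Algebra.TensorProduct.map (eAct g) (pAct g)

/-- A vector of `V` viewed inside the exterior algebra. -/
def exti (v : Vc r) : Ec r := ExteriorAlgebra.ι ℂ v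

/-- The de Rham differential on the Weil algebra: `d(q ⊗ k) = ∑ᵢ (xᵢ ∧ q) ⊗ ∂k/∂xᵢ`. -/
def deRham : Wc r →ₗ[ℂ] Wc r :=
  ∑ i, TensorProduct.map (LinearMap.mulLeft ℂ (exti (Pi.single i 1))) ((MvPolynomial.pderiv i).toLinearMap)

/-- The directional derivative `∂_v`. -/
def dirDeriv (v : Vc r) : Pc r →ₗ[ℂ] Pc r := ∑ i, v i • (MvPolynomial.pderiv i).toLinearMap

/-- `g` is a reflection with root `a`, with respect to the standard bilinear form. -/
def IsReflRoot (g : Vc r ≃ₗ[ℂ] Vc r) (a : Vc r) : Prop :=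
  a ≠ 0 ∧ g a = -a ∧ ∀ v, bil a v = 0 → g v = v

/-- The relation whose associated two-sided ideal is `𝒲J`, the ideal generated by the `ψᵢ`. -/
def relJ (ψ : Fin r → Pc r) : Wc r → Wc r → Prop :=
  fun x y => (∃ i, x = (1 : Ec r) ⊗ₜ[ℂ] ψ i) ∧ y = 0

/-- `B = ⋀V ⊗ H = 𝒲/𝒲J`. -/
abbrev Bc (ψ : Fin r → Pc r) := RingQuot (relJ ψ)

/-- The quotient map `π : 𝒲 → B`. -/
def πB (ψ : Fin r → Pc r) : Wc r →ₐ[ℂ] Bc ψ := RingQuot.mkAlgHom ℂ (relJ ψ)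

/-- The Solomon elements `pᵢ = π(d(1 ⊗ ψᵢ))`. -/
def pSol (ψ : Fin r → Pc r) (i : Fin r) : Bc ψ := πB ψ (deRham ((1 : Ec r) ⊗ₜ[ℂ] ψ i))

/-- The covariants `fᵢ(v) = π(1 ⊗ ∂_v ψᵢ)`. -/
def fcov (ψ : Fin r → Pc r) (i : Fin r) (v : Vc r) : Bc ψ :=
  πB ψ ((1 : Ec r) ⊗ₜ[ℂ] dirDeriv v (ψ i))

/-- The `B`-valued pairing `E(φ, χ) = ∑ᵢ φ(xᵢ)·χ(xᵢ)` on maps `V → B`. -/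
def Eform (ψ : Fin r → Pc r) (φ χ : Vc r → Bc ψ) : Bc ψ :=
  ∑ i, φ (Pi.single i 1) * χ (Pi.single i 1)


/-- The covariants `uᵢ = (r/(2|T|))·D∘fᵢ`, where `D` (given here as the operator `DB` on `B`
induced by `D = ∑_{s ∈ T} ∇ₛ`) is the Dunkl differential with `c = 1`. -/
def ucov (ψ : Fin r → Pc r) (T : Finset (Vc r ≃ₗ[ℂ] Vc r)) (DB : Bc ψ →ₗ[ℂ] Bc ψ)
    (i : Fin r) (v : Vc r) : Bc ψ :=
  ((r : ℂ) / (2 * T.card)) • DB (fcov ψ i v)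



/-! ### Auxiliary lemmas -/

lemma linP_single' (i : Fin r) : linP (Pi.single i 1 : Vc r) = MvPolynomial.X i := by
  unfold linP
  rw [Finset.sum_eq_single i]
  · simp
  · intro j _ hj; simp [Pi.single_apply, hj]
  · simp

lemma linP_sub_smul (v w : Vc r) (c : ℂ) :
    linP (v - c • w) = linP v - MvPolynomial.C c * linP w := by
  unfold linP
  rw [Finset.mul_sum, ← Finset.sum_sub_distrib]
  refine Finset.sum_congr rfl fun i _ => ?_
  simp only [Pi.sub_apply, Pi.smul_apply, smul_eq_mul, map_sub, map_mul]
  ring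

lemma bil_sub_smul (a v w : Vc r) (t : ℂ) : bil a (v - t • w) = bil a v - t * bil a w := by
  unfold bil
  rw [Finset.mul_sum, ← Finset.sum_sub_distrib]
  refine Finset.sum_congr rfl fun i _ => ?_
  simp only [Pi.sub_apply, Pi.smul_apply, smul_eq_mul]
  ring

lemma refl_formula {s : Vc r ≃ₗ[ℂ] Vc r} {a : Vc r} (h : IsReflRoot s a) :
    bil a a ≠ 0 ∧ ∀ v, s v = v - (2 * bil a v / bil a a) • a := by
  obtain ⟨ha, hsa, hfix⟩ := h
  have hne : bil a a ≠ 0 := by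
    intro h0
    have := hfix a h0
    rw [hsa] at this
    apply ha
    have h2 : (2 : ℂ) • a = 0 := by rw [two_smul]; nth_rewrite 1 [← this]; abel
    simpa using smul_eq_zero.mp h2 |>.resolve_left (by norm_num)
  refine ⟨hne, fun v => ?_⟩
  set t := bil a v / bil a a with ht
  have hh : bil a (v - t • a) = 0 := by
    rw [bil_sub_smul, ht, div_mul_cancel₀ _ hne, sub_self]
  have hv : v = (v - t • a) + t • a := by abel
  calc s v = s ((v - t • a) + t • a) := by rw [← hv]
    _ = s (v - t • a) + t • s a := by rw [map_add, map_smul]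
    _ = (v - t • a) + t • (-a) := by rw [hfix _ hh, hsa]
    _ = v - (2 * t) • a := by rw [two_mul, add_smul, smul_neg]; abel
    _ = v - (2 * bil a v / bil a a) • a := by rw [ht, mul_div_assoc]

lemma dvd_sub_pAct {s : Vc r ≃ₗ[ℂ] Vc r} {a : Vc r} (h : IsReflRoot s a) (x : Pc r) :
    ∃ q : Pc r, x - pAct s x = linP a * q := by
  obtain ⟨hne, hs⟩ := refl_formula h
  set I := Ideal.span {linP a} with hI
  have hmem : linP a ∈ I := Ideal.subset_span rfl
  have key : (Ideal.Quotient.mkₐ ℂ I).comp (pAct s) = Ideal.Quotient.mkₐ ℂ I := by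
    apply MvPolynomial.algHom_ext
    intro i
    have h1 : pAct s (MvPolynomial.X i) = linP (s (Pi.single i 1)) := by
      simp [pAct]
    rw [AlgHom.comp_apply, h1, hs (Pi.single i 1), linP_sub_smul, linP_single']
    simp only [map_sub, map_mul, Ideal.Quotient.mkₐ_eq_mk]
    rw [(Ideal.Quotient.eq_zero_iff_mem (I := I)).mpr hmem]
    simp
  have hkx := congrArg (fun φ => φ x) key
  simp only [AlgHom.comp_apply, Ideal.Quotient.mkₐ_eq_mk] at hkx
  have hmem2 : x - pAct s x ∈ I := by
    rw [← Ideal.Quotient.eq_zero_iff_mem, map_sub, hkx, sub_self]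
  exact Ideal.mem_span_singleton.mp hmem2

lemma linP_ne_zero {a : Vc r} (ha : a ≠ 0) : linP a ≠ 0 := by
  obtain ⟨i, hi⟩ := Function.ne_iff.mp ha
  intro h0
  apply hi
  have := congrArg (MvPolynomial.eval (Pi.single i 1 : Fin r → ℂ)) h0
  simpa [linP, MvPolynomial.eval_sum, Pi.single_apply, Finset.sum_ite_eq'] using this

lemma mul_tmul_injective {p : Pc r} (hp : p ≠ 0) :
    Function.Injective (fun z : Wc r => ((1 : Ec r) ⊗ₜ[ℂ] p) * z) := by
  have h1 : ∀ z : Wc r, ((1 : Ec r) ⊗ₜ[ℂ] p) * z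
      = LinearMap.lTensor (Ec r) (LinearMap.mulLeft ℂ p) z := by
    intro z
    induction z using TensorProduct.induction_on with
    | zero => simp
    | tmul e q => simp [Algebra.TensorProduct.tmul_mul_tmul]
    | add x y hx hy => rw [mul_add, hx, hy, map_add]
  intro u v huv
  simp only [h1] at huv
  exact Module.Flat.lTensor_preserves_injective_linearMap _
    (fun u v h => mul_left_cancel₀ hp (by simpa using h)) huv

lemma delta_nab {s : Vc r ≃ₗ[ℂ] Vc r} {a : Vc r} (hra : IsReflRoot s a)
    (nabs : Wc r →ₗ[ℂ] Wc r)
    (hnab : ∀ ω, ((1 : Ec r) ⊗ₜ[ℂ] linP a) * nabs ω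
      = ((exti a) ⊗ₜ[ℂ] (1 : Pc r)) * (ω - wAct s ω))
    (δW : Wc r →ₗ[ℂ] Wc r)
    (hδ0 : ∀ k : Pc r, δW ((1 : Ec r) ⊗ₜ[ℂ] k) = 0)
    (hδ1 : ∀ (v : Vc r) (ω : Wc r),
      δW ((exti v ⊗ₜ[ℂ] (1 : Pc r)) * ω)
        = ((1 : Ec r) ⊗ₜ[ℂ] linP v) * ω - (exti v ⊗ₜ[ℂ] (1 : Pc r)) * δW ω)
    (x : Pc r) :
    δW (nabs ((1 : Ec r) ⊗ₜ[ℂ] x)) = (1 : Ec r) ⊗ₜ[ℂ] (x - pAct s x) := by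
  obtain ⟨q, hq⟩ := dvd_sub_pAct hra x
  have h2 : wAct s ((1 : Ec r) ⊗ₜ[ℂ] x) = (1 : Ec r) ⊗ₜ[ℂ] pAct s x := by
    simp [wAct, Algebra.TensorProduct.map_tmul, map_one]
  have h3 : ((1 : Ec r) ⊗ₜ[ℂ] linP a) * nabs ((1 : Ec r) ⊗ₜ[ℂ] x)
      = ((1 : Ec r) ⊗ₜ[ℂ] linP a) * (exti a ⊗ₜ[ℂ] q) := by
    rw [hnab, h2, ← TensorProduct.tmul_sub, hq]
    simp [Algebra.TensorProduct.tmul_mul_tmul]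
  have h4 : nabs ((1 : Ec r) ⊗ₜ[ℂ] x) = exti a ⊗ₜ[ℂ] q :=
    mul_tmul_injective (linP_ne_zero hra.1) h3
  rw [h4]
  have h5 : (exti a ⊗ₜ[ℂ] q : Wc r) = (exti a ⊗ₜ[ℂ] (1 : Pc r)) * ((1 : Ec r) ⊗ₜ[ℂ] q) := by
    simp [Algebra.TensorProduct.tmul_mul_tmul]
  rw [h5, hδ1, hδ0, mul_zero, sub_zero, Algebra.TensorProduct.tmul_mul_tmul, one_mul, ← hq]

lemma schur_avg {G : Type*} [Group G] (W : Subgroup G)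
    (U : Type) [AddCommGroup U] [Module ℂ U] [FiniteDimensional ℂ U] [Nontrivial U]
    (σ : G → U ≃ₗ[ℂ] U)
    (hσ : ∀ g ∈ W, ∀ g' ∈ W, σ (g * g') = σ g * σ g')
    (hUirr : ∀ p : Submodule ℂ U, (∀ g ∈ W, ∀ u ∈ p, σ g u ∈ p) → p = ⊥ ∨ p = ⊤)
    (Tc : Finset G) (hTcW : ∀ s ∈ Tc, s ∈ W)
    (hconj : ∀ s ∈ Tc, ∀ w ∈ W, w * s * w⁻¹ ∈ Tc)
    (s0 : G) (hs0 : s0 ∈ Tc)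
    (hclass : ∀ s ∈ Tc, ∃ w ∈ W, w * s0 * w⁻¹ = s) :
    ∀ u : U, ∑ s ∈ Tc, σ s u
      = ((Tc.card : ℂ) * LinearMap.trace ℂ U (σ s0 : U →ₗ[ℂ] U)
          / (Module.finrank ℂ U : ℂ)) • u := by
  classical
  set τ : G → U →ₗ[ℂ] U := fun g => (σ g : U →ₗ[ℂ] U) with hτ
  have hσ1 : σ 1 = 1 := by
    have h := hσ 1 (one_mem W) 1 (one_mem W)
    rw [one_mul] at h
    exact mul_eq_left.mp h.symm
  have hτmul : ∀ g ∈ W, ∀ h ∈ W, τ (g * h) = τ g * τ h := by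
    intro g hg h hh
    rw [hτ]; simp only [hσ g hg h hh]
    ext u; rfl
  set P : U →ₗ[ℂ] U := ∑ s ∈ Tc, τ s with hP
  have hPapp : ∀ u, P u = ∑ s ∈ Tc, σ s u := by
    intro u; rw [hP, LinearMap.sum_apply]; rfl
  have hcomm : ∀ g ∈ W, ∀ u, σ g (P u) = P (σ g u) := by
    intro g hg u
    rw [hPapp, hPapp, map_sum]
    refine Finset.sum_bij' (fun s _ => g * s * g⁻¹) (fun s _ => g⁻¹ * s * g)
      (fun s hs => hconj s hs g hg) (fun s hs => ?_) (fun s hs => by group) (fun s hs => by group)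
      (fun s hs => ?_)
    · have := hconj s hs g⁻¹ (inv_mem hg)
      simpa [inv_inv] using this
    · have hsW := hTcW s hs
      have e1 : σ g (σ s u) = σ (g * s) u := by rw [hσ g hg s hsW]; rfl
      have e2 : σ (g * s * g⁻¹) (σ g u) = σ ((g * s * g⁻¹) * g) u := by
        rw [hσ _ (mul_mem (mul_mem hg hsW) (inv_mem hg)) g hg]; rfl
      rw [e1, e2]
      congr 1
      group
  obtain ⟨μ, hμ⟩ := Module.End.exists_eigenvalue (P : Module.End ℂ U)
  have hinv : ∀ g ∈ W, ∀ u ∈ Module.End.eigenspace (P : Module.End ℂ U) μ,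
      σ g u ∈ Module.End.eigenspace (P : Module.End ℂ U) μ := by
    intro g hg u hu
    rw [Module.End.mem_eigenspace_iff] at hu ⊢
    have h' : P (σ g u) = σ g (P u) := (hcomm g hg u).symm
    rw [h', hu, map_smul]
  have hK : Module.End.eigenspace (P : Module.End ℂ U) μ = ⊤ := by
    rcases hUirr _ hinv with h | h
    · exact absurd h hμ
    · exact h
  have hPu : ∀ u : U, P u = μ • u := by
    intro u
    have : u ∈ Module.End.eigenspace (P : Module.End ℂ U) μ := hK ▸ Submodule.mem_top
    exact Module.End.mem_eigenspace_iff.mp this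
  have htr1 : LinearMap.trace ℂ U P = μ * (Module.finrank ℂ U : ℂ) := by
    have : P = μ • (LinearMap.id : U →ₗ[ℂ] U) := by
      ext u; rw [hPu]; rfl
    rw [this, map_smul, LinearMap.trace_id]
    simp [smul_eq_mul]
  have htr2 : LinearMap.trace ℂ U P = (Tc.card : ℂ) * LinearMap.trace ℂ U (τ s0) := by
    rw [hP, map_sum]
    rw [Finset.sum_congr rfl (fun s hs => ?_), Finset.sum_const, nsmul_eq_mul]
    obtain ⟨w, hw, hws⟩ := hclass s hs
    have hwW : w ∈ W := hw
    have hs0W := hTcW s0 hs0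
    have : τ s = τ w * τ s0 * τ w⁻¹ := by
      rw [← hws, hτmul _ (mul_mem hwW hs0W) _ (inv_mem hwW), hτmul _ hwW _ hs0W]
    rw [this, LinearMap.trace_mul_comm, ← mul_assoc, ← hτmul _ (inv_mem hwW) _ hwW,
      inv_mul_cancel, show τ 1 = 1 by rw [hτ]; simp [hσ1]; rfl, one_mul]
  have hdim : (Module.finrank ℂ U : ℂ) ≠ 0 := by
    exact_mod_cast Nat.cast_ne_zero.mpr Module.finrank_pos.ne'
  have hμval : μ = (Tc.card : ℂ) * LinearMap.trace ℂ U (τ s0) / (Module.finrank ℂ U : ℂ) := by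
    field_simp
    rw [← htr1, htr2]
  intro u
  rw [← hPapp, hPu, hμval]

lemma total_sum {G : Type*} [Group G] {M : Type*} [AddCommGroup M] [Module ℂ M]
    (T Tl Tp : Finset G) (hTsplit : ∀ s, s ∈ T ↔ s ∈ Tl ∨ s ∈ Tp) (hTdisj : Disjoint Tl Tp)
    (c : G → ℂ) (cl cp : ℂ) (hcl : ∀ s ∈ Tl, c s = cl) (hcp : ∀ s ∈ Tp, c s = cp)
    (x : M) (y : G → M) (μl μp : ℂ)
    (hyl : ∑ s ∈ Tl, y s = μl • x) (hyp2 : ∑ s ∈ Tp, y s = μp • x) :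
    ∑ s ∈ T, c s • (x - y s)
      = (cl * ((Tl.card : ℂ) - μl) + cp * ((Tp.card : ℂ) - μp)) • x := by
  classical
  have hT : T = Tl ∪ Tp := Finset.ext fun s => by simpa using hTsplit s
  have part : ∀ (S : Finset G) (cv μ : ℂ), (∀ s ∈ S, c s = cv) → (∑ s ∈ S, y s = μ • x) →
      ∑ s ∈ S, c s • (x - y s) = (cv * ((S.card : ℂ) - μ)) • x := by
    intro S cv μ hc hy
    calc ∑ s ∈ S, c s • (x - y s) = ∑ s ∈ S, (cv • x - cv • y s) := by
          refine Finset.sum_congr rfl fun s hs => ?_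
          rw [hc s hs, smul_sub]
      _ = S.card • (cv • x) - cv • (μ • x) := by
          rw [Finset.sum_sub_distrib, Finset.sum_const, ← Finset.smul_sum, hy]
      _ = (cv * ((S.card : ℂ) - μ)) • x := by
          rw [smul_smul, ← Nat.cast_smul_eq_nsmul ℂ, smul_smul, ← sub_smul]
          congr 1
          ring
  rw [hT, Finset.sum_union hTdisj, part Tl cl μl hcl hyl, part Tp cp μp hcp hyp2, add_smul]

set_option maxHeartbeats 1600000 in
/-- Proposition 2.4 of De Concini–Papi.
Let `U` be an irreducible `W`-module and let `x` be an element of `A` (or of `H`) lying in a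
`W`-submodule isomorphic to `U` which it generates.  Then
`δ(D_c(x)) = (c(s_ℓ)·|T_ℓ|·(1 − χ_U(s_ℓ)/χ_U(1)) + c(s_p)·|T_p|·(1 − χ_U(s_p)/χ_U(1)))·x`,
where `χ_U` is the character of `U`. -/
theorem statement7
    -- `W` is a finite irreducible reflection group on `V = ℂ^r` (complexified euclidean space),
    (W : Subgroup (Vc r ≃ₗ[ℂ] Vc r))
    (hWfin : Finite W)
    (hWorth : ∀ g ∈ W, ∀ x y, bil (g x) (g y) = bil x y)
    (hWirr : ∀ p : Submodule ℂ (Vc r), (∀ g ∈ W, ∀ v ∈ p, g v ∈ p) → p = ⊥ ∨ p = ⊤)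
    -- `T` is the set of reflections of `W`, generating `W`, with roots `α s`,
    (T : Finset (Vc r ≃ₗ[ℂ] Vc r))
    (hT : ∀ g, g ∈ T ↔ g ∈ W ∧ ∃ a, IsReflRoot g a)
    (hWgen : Subgroup.closure (T : Set _) = W)
    (α : (Vc r ≃ₗ[ℂ] Vc r) → Vc r)
    (hα : ∀ s ∈ T, IsReflRoot s (α s))
    -- `ψ₁, …, ψᵣ` are homogeneous generators of `A^W` of degrees `2 ≤ d₁ ≤ … ≤ d_r`,
    (ψ : Fin r → Pc r) (d : Fin r → ℕ)
    (hψhom : ∀ i, (ψ i).IsHomogeneous (d i))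
    (hd2 : ∀ i, 2 ≤ d i) (hdmono : Monotone d)
    (hψinv : ∀ i, ∀ g ∈ W, pAct g (ψ i) = ψ i)
    (hψgen : ∀ q : Pc r, (∀ g ∈ W, pAct g q = q) ↔ q ∈ Algebra.adjoin ℂ (Set.range ψ))
    (hψind : AlgebraicIndependent ℂ ψ)
    -- `nab s` is the operator `∇ₛ = (αₛ ⊗ 1)·(1−s)/αₛ` on the Weil algebra, characterized by
    -- `(1 ⊗ αₛ) · ∇ₛ(ω) = (αₛ ⊗ 1) · (ω − s·ω)` (multiplication by `1 ⊗ αₛ` is injective),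
    (nab : (Vc r ≃ₗ[ℂ] Vc r) → Wc r →ₗ[ℂ] Wc r)
    (hnab : ∀ s ∈ T, ∀ ω, ((1 : Ec r) ⊗ₜ[ℂ] linP (α s)) * nab s ω
        = ((exti (α s)) ⊗ₜ[ℂ] (1 : Pc r)) * (ω - wAct s ω))
    -- `Bact g` is the action of `g` on `B` induced by the action on the Weil algebra,
    (Bact : (Vc r ≃ₗ[ℂ] Vc r) → Bc ψ →ₐ[ℂ] Bc ψ)
    (hBact : ∀ g : Vc r ≃ₗ[ℂ] Vc r, ∀ ω : Wc r, Bact g (πB ψ ω) = πB ψ (wAct g ω))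
    -- `c : T → ℂ` is a function constant on conjugacy classes,
    (c : (Vc r ≃ₗ[ℂ] Vc r) → ℂ)
    (hc : ∀ s ∈ T, ∀ w ∈ W, c (w * s * w⁻¹) = c s)
    -- `DcB` is the operator on `B` induced by the Dunkl differential `D_c = ∑_{s∈T} c(s)·∇ₛ`,
    (DcB : Bc ψ →ₗ[ℂ] Bc ψ)
    (hDcB : ∀ ω : Wc r, DcB (πB ψ ω) = πB ψ (∑ s ∈ T, c s • nab s ω))
    -- `T` is the disjoint union of the two conjugacy classes `T_ℓ` and `T_p`
    -- with representatives `s_ℓ ∈ T_ℓ` and `s_p ∈ T_p`,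
    (Tl Tp : Finset (Vc r ≃ₗ[ℂ] Vc r))
    (hTsplit : ∀ s, s ∈ T ↔ s ∈ Tl ∨ s ∈ Tp) (hTdisj : Disjoint Tl Tp)
    (hTlconj : ∀ s ∈ Tl, ∀ w ∈ W, w * s * w⁻¹ ∈ Tl)
    (hTpconj : ∀ s ∈ Tp, ∀ w ∈ W, w * s * w⁻¹ ∈ Tp)
    (hTlclass : ∀ s ∈ Tl, ∀ s' ∈ Tl, ∃ w ∈ W, w * s * w⁻¹ = s')
    (hTpclass : ∀ s ∈ Tp, ∀ s' ∈ Tp, ∃ w ∈ W, w * s * w⁻¹ = s')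
    (sl sp : Vc r ≃ₗ[ℂ] Vc r) (hsl : sl ∈ Tl) (hsp : sp ∈ Tp)
    -- `δW` is the Koszul differential on the Weil algebra, the odd derivation with
    -- `δ(v ⊗ 1) = 1 ⊗ v` and `δ(1 ⊗ f) = 0`; `δB` is the induced operator on `B`,
    (δW : Wc r →ₗ[ℂ] Wc r)
    (hδ0 : ∀ k : Pc r, δW ((1 : Ec r) ⊗ₜ[ℂ] k) = 0)
    (hδ1 : ∀ (v : Vc r) (ω : Wc r),
      δW ((exti v ⊗ₜ[ℂ] (1 : Pc r)) * ω)
        = ((1 : Ec r) ⊗ₜ[ℂ] linP v) * ω - (exti v ⊗ₜ[ℂ] (1 : Pc r)) * δW ω)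
    (δB : Bc ψ →ₗ[ℂ] Bc ψ)
    (hδB : ∀ ω : Wc r, δB (πB ψ ω) = πB ψ (δW ω))
    -- `U` is an irreducible `W`-module (`σ` a representation of `W` on `U`):
    (U : Type) [AddCommGroup U] [Module ℂ U] [FiniteDimensional ℂ U] [Nontrivial U]
    (σ : (Vc r ≃ₗ[ℂ] Vc r) → U ≃ₗ[ℂ] U)
    (hσ : ∀ g ∈ W, ∀ g' ∈ W, σ (g * g') = σ g * σ g')
    (hUirr : ∀ p : Submodule ℂ U, (∀ g ∈ W, ∀ u ∈ p, σ g u ∈ p) → p = ⊥ ∨ p = ⊤) :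
    -- the version for `x ∈ A ⊆ 𝒲`:
    (∀ (x : Pc r) (j : U →ₗ[ℂ] Pc r), Function.Injective j →
      (∀ g ∈ W, ∀ u, j (σ g u) = pAct g (j u)) →
      x ∈ LinearMap.range j →
      Submodule.span ℂ {y | ∃ g ∈ W, y = pAct g x} = LinearMap.range j →
      δW (∑ s ∈ T, c s • nab s ((1 : Ec r) ⊗ₜ[ℂ] x))
        = (c sl * (Tl.card : ℂ)
              * (1 - LinearMap.trace ℂ U (σ sl : U →ₗ[ℂ] U) / (Module.finrank ℂ U : ℂ))
            + c sp * (Tp.card : ℂ)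
              * (1 - LinearMap.trace ℂ U (σ sp : U →ₗ[ℂ] U) / (Module.finrank ℂ U : ℂ)))
            • ((1 : Ec r) ⊗ₜ[ℂ] x))
    -- and the version for `x ∈ H ⊆ B`:
    ∧ (∀ (x : Bc ψ) (j : U →ₗ[ℂ] Bc ψ), Function.Injective j →
      (∀ g ∈ W, ∀ u, j (σ g u) = Bact g (j u)) →
      (∀ u, ∃ k : Pc r, j u = πB ψ ((1 : Ec r) ⊗ₜ[ℂ] k)) →
      x ∈ LinearMap.range j →
      Submodule.span ℂ {y | ∃ g ∈ W, y = Bact g x} = LinearMap.range j →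
      δB (DcB x)
        = (c sl * (Tl.card : ℂ)
              * (1 - LinearMap.trace ℂ U (σ sl : U →ₗ[ℂ] U) / (Module.finrank ℂ U : ℂ))
            + c sp * (Tp.card : ℂ)
              * (1 - LinearMap.trace ℂ U (σ sp : U →ₗ[ℂ] U) / (Module.finrank ℂ U : ℂ)))
            • x) := by
  have hdim : (Module.finrank ℂ U : ℂ) ≠ 0 :=
    Nat.cast_ne_zero.mpr Module.finrank_pos.ne'
  have hslT : sl ∈ T := (hTsplit sl).mpr (Or.inl hsl)
  have hspT : sp ∈ T := (hTsplit sp).mpr (Or.inr hsp)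
  have hTW : ∀ s ∈ T, s ∈ W := fun s hs => ((hT s).mp hs).1
  have hTlT : ∀ s ∈ Tl, s ∈ T := fun s hs => (hTsplit s).mpr (Or.inl hs)
  have hTpT : ∀ s ∈ Tp, s ∈ T := fun s hs => (hTsplit s).mpr (Or.inr hs)
  set χl := LinearMap.trace ℂ U (σ sl : U →ₗ[ℂ] U) with hχl
  set χp := LinearMap.trace ℂ U (σ sp : U →ₗ[ℂ] U) with hχp
  set dU := (Module.finrank ℂ U : ℂ) with hdU
  have schurl : ∀ u : U, ∑ s ∈ Tl, σ s u = ((Tl.card : ℂ) * χl / dU) • u :=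
    schur_avg W U σ hσ hUirr Tl (fun s hs => hTW s (hTlT s hs)) hTlconj sl hsl
      (fun s hs => hTlclass sl hsl s hs)
  have schurp : ∀ u : U, ∑ s ∈ Tp, σ s u = ((Tp.card : ℂ) * χp / dU) • u :=
    schur_avg W U σ hσ hUirr Tp (fun s hs => hTW s (hTpT s hs)) hTpconj sp hsp
      (fun s hs => hTpclass sp hsp s hs)
  have hcl : ∀ s ∈ Tl, c s = c sl := by
    intro s hs
    obtain ⟨w, hw, hws⟩ := hTlclass sl hsl s hs
    rw [← hws]; exact hc sl hslT w hw
  have hcp : ∀ s ∈ Tp, c s = c sp := by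
    intro s hs
    obtain ⟨w, hw, hws⟩ := hTpclass sp hsp s hs
    rw [← hws]; exact hc sp hspT w hw
  have hΛ : c sl * ((Tl.card : ℂ) - (Tl.card : ℂ) * χl / dU)
      + c sp * ((Tp.card : ℂ) - (Tp.card : ℂ) * χp / dU)
      = c sl * (Tl.card : ℂ) * (1 - χl / dU) + c sp * (Tp.card : ℂ) * (1 - χp / dU) := by
    ring
  have hdelta : ∀ k : Pc r, δW (∑ s ∈ T, c s • nab s ((1 : Ec r) ⊗ₜ[ℂ] k))
      = (1 : Ec r) ⊗ₜ[ℂ] (∑ s ∈ T, c s • (k - pAct s k)) := by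
    intro k
    rw [map_sum, TensorProduct.tmul_sum]
    refine Finset.sum_congr rfl fun s hs => ?_
    rw [map_smul, delta_nab (hα s hs) (nab s) (hnab s hs) δW hδ0 hδ1, TensorProduct.tmul_smul]
  constructor
  · intro x j hjinj hjeq hxr hspan
    obtain ⟨u₀, hu₀⟩ := hxr
    have hyact : ∀ s ∈ T, pAct s x = j (σ s u₀) := by
      intro s hs
      rw [hjeq s (hTW s hs) u₀, hu₀]
    have hyl : ∑ s ∈ Tl, pAct s x = ((Tl.card : ℂ) * χl / dU) • x := by
      rw [Finset.sum_congr rfl (fun s hs => hyact s (hTlT s hs)), ← map_sum,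
        schurl u₀, map_smul, hu₀]
    have hyp2 : ∑ s ∈ Tp, pAct s x = ((Tp.card : ℂ) * χp / dU) • x := by
      rw [Finset.sum_congr rfl (fun s hs => hyact s (hTpT s hs)), ← map_sum,
        schurp u₀, map_smul, hu₀]
    have hsum : ∑ s ∈ T, c s • (x - pAct s x)
        = (c sl * ((Tl.card : ℂ) - (Tl.card : ℂ) * χl / dU)
            + c sp * ((Tp.card : ℂ) - (Tp.card : ℂ) * χp / dU)) • x :=
      total_sum T Tl Tp hTsplit hTdisj c (c sl) (c sp) hcl hcp x (fun s => pAct s x)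
        _ _ hyl hyp2
    rw [hdelta x, hsum, TensorProduct.tmul_smul, hΛ]
  · intro x j hjinj hjeq hjk hxr hspan
    obtain ⟨u₀, hu₀⟩ := hxr
    obtain ⟨k, hk⟩ := hjk u₀
    have hx : πB ψ ((1 : Ec r) ⊗ₜ[ℂ] k) = x := by rw [← hk, hu₀]
    have hyact : ∀ s ∈ T, Bact s x = j (σ s u₀) := by
      intro s hs
      rw [hjeq s (hTW s hs) u₀, hu₀]
    have hyl : ∑ s ∈ Tl, Bact s x = ((Tl.card : ℂ) * χl / dU) • x := by
      rw [Finset.sum_congr rfl (fun s hs => hyact s (hTlT s hs)), ← map_sum,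
        schurl u₀, map_smul, hu₀]
    have hyp2 : ∑ s ∈ Tp, Bact s x = ((Tp.card : ℂ) * χp / dU) • x := by
      rw [Finset.sum_congr rfl (fun s hs => hyact s (hTpT s hs)), ← map_sum,
        schurp u₀, map_smul, hu₀]
    have hsum : ∑ s ∈ T, c s • (x - Bact s x)
        = (c sl * ((Tl.card : ℂ) - (Tl.card : ℂ) * χl / dU)
            + c sp * ((Tp.card : ℂ) - (Tp.card : ℂ) * χp / dU)) • x :=
      total_sum T Tl Tp hTsplit hTdisj c (c sl) (c sp) hcl hcp x (fun s => Bact s x)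
        _ _ hyl hyp2
    have hπsmul : ∀ (a : ℂ) (w : Wc r), πB ψ (a • w) = a • πB ψ w := fun a w => by
      have h := LinearMap.map_smul (πB ψ).toLinearMap a w
      rw [AlgHom.toLinearMap_apply, AlgHom.toLinearMap_apply] at h
      exact h
    have hpush : πB ψ ((1 : Ec r) ⊗ₜ[ℂ] (∑ s ∈ T, c s • (k - pAct s k)))
        = ∑ s ∈ T, c s • (x - Bact s x) := by
      rw [TensorProduct.tmul_sum, map_sum]
      refine Finset.sum_congr rfl fun s hs => ?_
      rw [TensorProduct.tmul_smul, hπsmul]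
      congr 1
      rw [TensorProduct.tmul_sub, map_sub, hx]
      congr 1
      have hw : (1 : Ec r) ⊗ₜ[ℂ] pAct s k = wAct s ((1 : Ec r) ⊗ₜ[ℂ] k) := by
        simp [wAct, Algebra.TensorProduct.map_tmul, map_one]
      rw [hw, ← hBact, hx]
    calc δB (DcB x) = δB (πB ψ (∑ s ∈ T, c s • nab s ((1 : Ec r) ⊗ₜ[ℂ] k))) := by
          rw [← hx, hDcB]
      _ = πB ψ (δW (∑ s ∈ T, c s • nab s ((1 : Ec r) ⊗ₜ[ℂ] k))) := hδB _
      _ = ∑ s ∈ T, c s • (x - Bact s x) := by rw [hdelta k, hpush]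
      _ = _ := by rw [hsum, hΛ]
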